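/- There exists a point x ∈ R² \ {0} and ε₀ > 0 such that the function u(y) = |y|^{-1}, which is 3/2-harmonic on R² \ {0}, fails to satisfy the exact (non-asymptotic) identity u(x) = (2/p - 1)·med_{∂B_ε(x)} u + (2 - 2/p)·(average of u over ∂B_ε(x)) with p = 3/2 for some ε ∈ (0, ε₀); in fact the identity fails for a sequence of ε tending to 0. -/

import Mathlib

open MeasureTheory Real Filter Asymptotics Metric Set Topology

/-- Partial derivative ∂u/∂x_i. -/
noncomputable def pd {N : ℕ} (u : EuclideanSpace ℝ (Fin N) → ℝ) (i : Fin N)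
    (x : EuclideanSpace ℝ (Fin N)) : ℝ :=
  fderiv ℝ u x (EuclideanSpace.single i 1)

/-- Second partial derivative ∂²u/∂x_i∂x_j. -/
noncomputable def pd2 {N : ℕ} (u : EuclideanSpace ℝ (Fin N) → ℝ) (i j : Fin N)
    (x : EuclideanSpace ℝ (Fin N)) : ℝ :=
  pd (pd u j) i x

/-- The norm of the gradient |Du(x)|. -/
noncomputable def gradNorm {N : ℕ} (u : EuclideanSpace ℝ (Fin N) → ℝ)
    (x : EuclideanSpace ℝ (Fin N)) : ℝ :=
  Real.sqrt (∑ i, (pd u i x) ^ 2)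

/-- The Laplacian Δu. -/
noncomputable def lap {N : ℕ} (u : EuclideanSpace ℝ (Fin N) → ℝ)
    (x : EuclideanSpace ℝ (Fin N)) : ℝ :=
  ∑ i, pd2 u i i x

/-- The infinity-Laplacian Δ_∞ u = |Du|⁻² Σ ∂_i u ∂_j u ∂_ij u. -/
noncomputable def infLap {N : ℕ} (u : EuclideanSpace ℝ (Fin N) → ℝ)
    (x : EuclideanSpace ℝ (Fin N)) : ℝ :=
  (∑ i, ∑ j, pd u i x * pd u j x * pd2 u i j x) / (gradNorm u x) ^ 2

/-- The p-Laplacian Δ_p u = div(|Du|^{p-2} Du). -/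
noncomputable def pLap {N : ℕ} (p : ℝ) (u : EuclideanSpace ℝ (Fin N) → ℝ)
    (x : EuclideanSpace ℝ (Fin N)) : ℝ :=
  ∑ i, pd (fun y => gradNorm u y ^ (p - 2) * pd u i y) i x

/-- The 1-Laplacian Δ_1 u = |Du| div(Du/|Du|). -/
noncomputable def oneLap {N : ℕ} (u : EuclideanSpace ℝ (Fin N) → ℝ)
    (x : EuclideanSpace ℝ (Fin N)) : ℝ :=
  gradNorm u x * ∑ i, pd (fun y => pd u i y / gradNorm u y) i x

/-- The point x + ε(cos θ, sin θ) on the circle ∂B_ε(x). -/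
noncomputable def circlePt (x : EuclideanSpace ℝ (Fin 2)) (ε θ : ℝ) :
    EuclideanSpace ℝ (Fin 2) :=
  x + ε • (EuclideanSpace.single 0 (Real.cos θ) + EuclideanSpace.single 1 (Real.sin θ))

/-- The average of u over the circle ∂B_ε(x). -/
noncomputable def circleAvg (u : EuclideanSpace ℝ (Fin 2) → ℝ)
    (x : EuclideanSpace ℝ (Fin 2)) (ε : ℝ) : ℝ :=
  (2 * Real.pi)⁻¹ * ∫ θ in (0:ℝ)..(2 * Real.pi), u (circlePt x ε θ)

/-- m is a median of u over the circle ∂B_ε(x): the arc-length measures of the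
sets where u ≥ m and u ≤ m coincide. -/
def IsCircleMedian (u : EuclideanSpace ℝ (Fin 2) → ℝ)
    (x : EuclideanSpace ℝ (Fin 2)) (ε m : ℝ) : Prop :=
  volume {θ ∈ Set.Ico (0:ℝ) (2 * Real.pi) | m ≤ u (circlePt x ε θ)} =
  volume {θ ∈ Set.Ico (0:ℝ) (2 * Real.pi) | u (circlePt x ε θ) ≤ m}

open intervalIntegral

lemma norm_circlePt (ε θ : ℝ) :
    ‖circlePt (EuclideanSpace.single 0 1) ε θ‖ = Real.sqrt (1 + 2*ε*Real.cos θ + ε^2) := by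
  have h0 : circlePt (EuclideanSpace.single 0 1) ε θ 0 = 1 + ε * Real.cos θ := by
    simp [circlePt]
  have h1 : circlePt (EuclideanSpace.single 0 1) ε θ 1 = ε * Real.sin θ := by
    simp [circlePt]
  rw [EuclideanSpace.norm_eq, Fin.sum_univ_two, h0, h1, Real.norm_eq_abs, Real.norm_eq_abs,
    sq_abs, sq_abs]
  congr 1
  linear_combination (ε^2) * (Real.sin_sq_add_cos_sq θ)

lemma poly_le_inv_sqrt (t : ℝ) (ht : -1 < t) :
    1 - t/2 + 3/8*t^2 - 5/16*t^3 + 35/128*t^4 - 63/256*t^5 ≤ (Real.sqrt (1+t))⁻¹ := by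
  have h0 : (0:ℝ) < 1 + t := by linarith
  have hs : 0 < Real.sqrt (1+t) := Real.sqrt_pos.mpr h0
  set s := Real.sqrt (1+t) with hsdef
  have hs2 : s^2 = 1 + t := Real.sq_sqrt h0.le
  have ht' : t = s^2 - 1 := by linarith
  rw [← one_div, le_div_iff₀ hs, ht']
  have hR : (0:ℝ) ≤ 1 + 843/256*s + 609/128*s^2 + 469/128*s^3 + 189/128*s^4 + 63/256*s^5 := by
    positivity
  have h6 : (0:ℝ) ≤ (s-1)^6 := by positivity
  nlinarith [mul_nonneg h6 hR]

lemma e1 : ∫ θ in (0:ℝ)..(2*π), cos θ = 0 := by simp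
lemma e2 : ∫ θ in (0:ℝ)..(2*π), cos θ ^ 2 = π := by
  rw [integral_cos_sq]; simp
lemma e3 : ∫ θ in (0:ℝ)..(2*π), cos θ ^ 3 = 0 := by
  rw [integral_cos_pow_three]; simp
lemma e4 : ∫ θ in (0:ℝ)..(2*π), cos θ ^ 4 = 3/4*π := by
  have h := @integral_cos_pow 0 (2*π) 2
  norm_num [e2] at h
  linarith
lemma e5 : ∫ θ in (0:ℝ)..(2*π), cos θ ^ 5 = 0 := by
  have h := @integral_cos_pow 0 (2*π) 3
  norm_num [e3] at h
  exact h

lemma trigpoly_integral (d₀ d₁ d₂ d₃ d₄ d₅ : ℝ) :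
    ∫ θ in (0:ℝ)..(2*π),
        (d₀ + d₁ * cos θ + d₂ * cos θ^2 + d₃ * cos θ^3 + d₄ * cos θ^4 + d₅ * cos θ^5)
      = 2*π*d₀ + π*d₂ + 3/4*π*d₄ := by
  have i0 : IntervalIntegrable (fun _ : ℝ => d₀) volume 0 (2*π) :=
    (continuous_const).intervalIntegrable _ _
  have ic : ∀ (c : ℝ) (n : ℕ),
      IntervalIntegrable (fun θ : ℝ => c * cos θ ^ n) volume 0 (2*π) := fun c n =>
    ((continuous_const.mul ((Real.continuous_cos).pow n))).intervalIntegrable _ _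
  have s1 : IntervalIntegrable (fun θ : ℝ => d₀ + d₁ * cos θ) volume 0 (2*π) := by
    simpa using i0.add (by simpa using ic d₁ 1)
  have s2 : IntervalIntegrable (fun θ : ℝ => d₀ + d₁ * cos θ + d₂ * cos θ^2) volume 0 (2*π) :=
    s1.add (ic d₂ 2)
  have s3 : IntervalIntegrable
      (fun θ : ℝ => d₀ + d₁ * cos θ + d₂ * cos θ^2 + d₃ * cos θ^3) volume 0 (2*π) :=
    s2.add (ic d₃ 3)
  have s4 : IntervalIntegrable
      (fun θ : ℝ => d₀ + d₁ * cos θ + d₂ * cos θ^2 + d₃ * cos θ^3 + d₄ * cos θ^4)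
      volume 0 (2*π) := s3.add (ic d₄ 4)
  rw [integral_add s4 (ic d₅ 5), integral_add s3 (ic d₄ 4), integral_add s2 (ic d₃ 3),
    integral_add s1 (ic d₂ 2), integral_add i0 (by simpa using ic d₁ 1)]
  rw [intervalIntegral.integral_const_mul, intervalIntegral.integral_const_mul, intervalIntegral.integral_const_mul, intervalIntegral.integral_const_mul,
    intervalIntegral.integral_const_mul]
  rw [e1, e2, e3, e4, e5, intervalIntegral.integral_const]
  simp [smul_eq_mul]
  ring

set_option maxHeartbeats 1000000 in
lemma avg_gt (ε : ℝ) (hε : 0 < ε) (hε1 : ε ≤ 1/100) :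
    1 + ε^2/4 < circleAvg (fun y => ‖y‖⁻¹) (EuclideanSpace.single 0 1) ε := by
  have hπ := Real.pi_pos
  have hXpos : ∀ θ : ℝ, 0 < 1 + 2*ε*Real.cos θ + ε^2 := fun θ => by
    nlinarith [Real.neg_one_le_cos θ]
  have hcont : Continuous (fun θ : ℝ => (Real.sqrt (1 + 2*ε*Real.cos θ + ε^2))⁻¹) := by
    apply Continuous.inv₀
    · exact Real.continuous_sqrt.comp (by continuity)
    · intro θ; exact (Real.sqrt_pos.mpr (hXpos θ)).ne'
  have hlowcont : Continuous (fun θ : ℝ =>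
      (1 - ε^2/2 + 3/8*ε^4 - 5/16*ε^6 + 35/128*ε^8 - 63/256*ε^10)
      + (-ε + 3/2*ε^3 - 15/8*ε^5 + 35/16*ε^7 - 315/128*ε^9) * cos θ
      + (3/2*ε^2 - 15/4*ε^4 + 105/16*ε^6 - 315/32*ε^8) * cos θ^2
      + (-5/2*ε^3 + 35/4*ε^5 - 315/16*ε^7) * cos θ^3
      + (35/8*ε^4 - 315/16*ε^6) * cos θ^4
      + (-63/8*ε^5) * cos θ^5) := by continuity
  have hlow : ∀ θ ∈ Set.Icc (0:ℝ) (2*π),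
      (1 - ε^2/2 + 3/8*ε^4 - 5/16*ε^6 + 35/128*ε^8 - 63/256*ε^10)
      + (-ε + 3/2*ε^3 - 15/8*ε^5 + 35/16*ε^7 - 315/128*ε^9) * cos θ
      + (3/2*ε^2 - 15/4*ε^4 + 105/16*ε^6 - 315/32*ε^8) * cos θ^2
      + (-5/2*ε^3 + 35/4*ε^5 - 315/16*ε^7) * cos θ^3
      + (35/8*ε^4 - 315/16*ε^6) * cos θ^4
      + (-63/8*ε^5) * cos θ^5
      ≤ (Real.sqrt (1 + 2*ε*Real.cos θ + ε^2))⁻¹ := by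
    intro θ _
    have ht : -1 < 2*ε*Real.cos θ + ε^2 := by nlinarith [Real.neg_one_le_cos θ]
    have h := poly_le_inv_sqrt (2*ε*Real.cos θ + ε^2) ht
    calc (1 - ε^2/2 + 3/8*ε^4 - 5/16*ε^6 + 35/128*ε^8 - 63/256*ε^10)
          + (-ε + 3/2*ε^3 - 15/8*ε^5 + 35/16*ε^7 - 315/128*ε^9) * cos θ
          + (3/2*ε^2 - 15/4*ε^4 + 105/16*ε^6 - 315/32*ε^8) * cos θ^2
          + (-5/2*ε^3 + 35/4*ε^5 - 315/16*ε^7) * cos θ^3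
          + (35/8*ε^4 - 315/16*ε^6) * cos θ^4
          + (-63/8*ε^5) * cos θ^5
        = 1 - (2*ε*Real.cos θ + ε^2)/2 + 3/8*(2*ε*Real.cos θ + ε^2)^2
          - 5/16*(2*ε*Real.cos θ + ε^2)^3 + 35/128*(2*ε*Real.cos θ + ε^2)^4
          - 63/256*(2*ε*Real.cos θ + ε^2)^5 := by ring
      _ ≤ (Real.sqrt (1 + (2*ε*Real.cos θ + ε^2)))⁻¹ := h
      _ = (Real.sqrt (1 + 2*ε*Real.cos θ + ε^2))⁻¹ := by ring_nf
  have hmono := intervalIntegral.integral_mono_on (by positivity : (0:ℝ) ≤ 2*π)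
    (hlowcont.intervalIntegrable (μ := volume) 0 (2*π)) (hcont.intervalIntegrable (μ := volume) 0 (2*π)) hlow
  rw [trigpoly_integral] at hmono
  unfold circleAvg
  simp only [norm_circlePt]
  have h2πpos : (0:ℝ) < 2*π := by positivity
  have hε2 : ε^2 ≤ 1/10000 := by nlinarith
  have hε4 : ε^4 ≤ 1/10000 := by nlinarith [sq_nonneg ε, mul_le_mul hε2 hε2 (sq_nonneg ε) (by norm_num : (0:ℝ) ≤ 1/10000)]
  have hε6 : ε^6 ≤ 1/10000 := by nlinarith [sq_nonneg ε, pow_nonneg hε.le 4, mul_le_mul hε4 hε2 (sq_nonneg ε) (by norm_num : (0:ℝ) ≤ 1/10000)]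
  have hq : (0:ℝ) < 9/32 - 565/64*ε^2 - 595/64*ε^4 - 63/128*ε^6 := by linarith
  have h4 : (0:ℝ) < ε^4 := by positivity
  have hC : 2*π*(1+ε^2/4) <
      2*π*(1 - ε^2/2 + 3/8*ε^4 - 5/16*ε^6 + 35/128*ε^8 - 63/256*ε^10)
      + π*(3/2*ε^2 - 15/4*ε^4 + 105/16*ε^6 - 315/32*ε^8)
      + 3/4*π*(35/8*ε^4 - 315/16*ε^6) := by
    nlinarith [mul_pos hπ (mul_pos h4 hq)]
  calc 1 + ε^2/4 = (2*π)⁻¹ * (2*π*(1+ε^2/4)) := (inv_mul_cancel_left₀ (ne_of_gt h2πpos) _).symm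
    _ < (2*π)⁻¹ * ∫ θ in (0:ℝ)..(2*π), (Real.sqrt (1 + 2*ε*Real.cos θ + ε^2))⁻¹ := by
        apply mul_lt_mul_of_pos_left (lt_of_lt_of_le hC hmono) (inv_pos.mpr h2πpos)


set_option maxHeartbeats 1600000 in
lemma median_ge (ε m : ℝ) (hε : 0 < ε) (hε1 : ε ≤ 1/100)
    (hmed : IsCircleMedian (fun y => ‖y‖⁻¹) (EuclideanSpace.single 0 1) ε m) :
    1 - ε^2/2 ≤ m := by
  by_contra hcon
  push_neg at hcon
  have hπ := Real.pi_pos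
  unfold IsCircleMedian at hmed
  simp only [norm_circlePt] at hmed
  have hXpos : ∀ θ : ℝ, 0 < 1 + 2*ε*Real.cos θ + ε^2 := fun θ => by
    nlinarith [Real.neg_one_le_cos θ]
  -- step 1: the superlevel set contains Icc (π/2) (3π/2)
  have hsub1 : Icc (π/2) (3*π/2) ⊆
      {θ ∈ Set.Ico (0:ℝ) (2*π) | m ≤ (Real.sqrt (1 + 2*ε*Real.cos θ + ε^2))⁻¹} := by
    rintro θ ⟨ht1, ht2⟩
    have hc : Real.cos θ ≤ 0 :=
      Real.cos_nonpos_of_pi_div_two_le_of_le ht1 (by linarith)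
    have hX := hXpos θ
    have hs : 0 < Real.sqrt (1 + 2*ε*Real.cos θ + ε^2) := Real.sqrt_pos.mpr hX
    have hs2 : (Real.sqrt (1 + 2*ε*Real.cos θ + ε^2))^2 = 1 + 2*ε*Real.cos θ + ε^2 :=
      Real.sq_sqrt hX.le
    constructor
    · exact ⟨by linarith, by linarith⟩
    · -- m < 1 - ε²/2 ≤ (sqrt X)⁻¹
      have hk : (0:ℝ) < 1 - ε^2/2 := by nlinarith
      have hXle : (Real.sqrt (1 + 2*ε*Real.cos θ + ε^2))^2 ≤ 1 + ε^2 := by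
        rw [hs2]
        nlinarith [mul_nonpos_of_nonneg_of_nonpos hε.le hc]
      have h3e : (0:ℝ) ≤ (3 - ε^2) * ε^4 :=
        mul_nonneg (by nlinarith) (pow_nonneg hε.le 4)
      have hky2 : ((1 - ε^2/2) * Real.sqrt (1 + 2*ε*Real.cos θ + ε^2))^2 ≤ 1 := by
        nlinarith [mul_le_mul_of_nonneg_left hXle (sq_nonneg (1-ε^2/2))]
      have key : (1 - ε^2/2) * Real.sqrt (1 + 2*ε*Real.cos θ + ε^2) ≤ 1 := by
        nlinarith [hky2, mul_nonneg hk.le hs.le]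
      rw [← one_div, le_div_iff₀ hs]
      nlinarith [hs.le]
  have hge : ENNReal.ofReal π ≤
      volume {θ ∈ Set.Ico (0:ℝ) (2*π) | m ≤ (Real.sqrt (1 + 2*ε*Real.cos θ + ε^2))⁻¹} := by
    calc ENNReal.ofReal π = volume (Icc (π/2) (3*π/2)) := by
          rw [Real.volume_Icc]; congr 1; ring
      _ ≤ _ := measure_mono hsub1
  rcases le_or_gt m 0 with hm0 | hm0
  · -- sublevel set is empty
    have hempty : {θ ∈ Set.Ico (0:ℝ) (2*π) | (Real.sqrt (1 + 2*ε*Real.cos θ + ε^2))⁻¹ ≤ m}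
        = ∅ := by
      ext θ
      simp only [Set.mem_setOf_eq, Set.mem_empty_iff_false, iff_false, not_and]
      intro _
      have hs : 0 < (Real.sqrt (1 + 2*ε*Real.cos θ + ε^2))⁻¹ :=
        inv_pos.mpr (Real.sqrt_pos.mpr (hXpos θ))
      linarith
    rw [hempty, measure_empty] at hmed
    rw [hmed] at hge
    simp only [nonpos_iff_eq_zero, ENNReal.ofReal_eq_zero] at hge
    exact absurd (le_of_eq rfl) (not_le.mpr (lt_of_lt_of_le hπ (by
      exact_mod_cast hge)))
  · -- m > 0 : sublevel set is contained in two short arcs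
    have hm2 : 0 < m^2 := by positivity
    have hmf : m^2 * (1+ε^2) < 1 := by
      have hmlt : m^2 < (1-ε^2/2)^2 := by nlinarith
      have h3e : (0:ℝ) < (3 - ε^2) * ε^4 :=
        mul_pos (by nlinarith) (pow_pos hε 4)
      have h1 : (1-ε^2/2)^2*(1+ε^2) < 1 := by nlinarith
      nlinarith [mul_lt_mul_of_pos_right hmlt (show (0:ℝ) < 1+ε^2 by positivity)]
    have hnum : 0 < 1/m^2 - 1 - ε^2 := by
      have : 1 + ε^2 < 1/m^2 := by
        rw [lt_div_iff₀ hm2]; nlinarith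
      linarith
    set c₀ : ℝ := min 1 ((1/m^2 - 1 - ε^2)/(2*ε)) with hc₀def
    have hc₀pos : 0 < c₀ := lt_min one_pos (by positivity)
    have hc₀le1 : c₀ ≤ 1 := min_le_left _ _
    set a : ℝ := Real.arccos c₀ with hadef
    have ha0 : 0 ≤ a := Real.arccos_nonneg _
    have ha2 : a < π/2 := Real.arccos_lt_pi_div_two.mpr hc₀pos
    have hca : Real.cos a = c₀ := Real.cos_arccos (by linarith) hc₀le1
    have hsub2 : {θ ∈ Set.Ico (0:ℝ) (2*π) | (Real.sqrt (1 + 2*ε*Real.cos θ + ε^2))⁻¹ ≤ m}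
        ⊆ Icc 0 a ∪ Icc (2*π - a) (2*π) := by
      rintro θ ⟨⟨hθ0, hθ2⟩, hle⟩
      have hX := hXpos θ
      have hs : 0 < Real.sqrt (1 + 2*ε*Real.cos θ + ε^2) := Real.sqrt_pos.mpr hX
      have hs2 : (Real.sqrt (1 + 2*ε*Real.cos θ + ε^2))^2 = 1 + 2*ε*Real.cos θ + ε^2 :=
        Real.sq_sqrt hX.le
      have h1m : 1 ≤ m * Real.sqrt (1 + 2*ε*Real.cos θ + ε^2) := by
        calc (1:ℝ) = Real.sqrt (1 + 2*ε*Real.cos θ + ε^2)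
              * (Real.sqrt (1 + 2*ε*Real.cos θ + ε^2))⁻¹ := (mul_inv_cancel₀ hs.ne').symm
          _ ≤ Real.sqrt (1 + 2*ε*Real.cos θ + ε^2) * m :=
              mul_le_mul_of_nonneg_left hle hs.le
          _ = m * Real.sqrt (1 + 2*ε*Real.cos θ + ε^2) := mul_comm _ _
      have h2m : 1 ≤ m^2 * (1 + 2*ε*Real.cos θ + ε^2) := by
        nlinarith [hs.le]
      have hcos : c₀ ≤ Real.cos θ := by
        have hx2 : (1/m^2 - 1 - ε^2)/(2*ε) ≤ Real.cos θ := by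
          rw [div_le_iff₀ (by positivity)]
          have : 1/m^2 ≤ 1 + 2*ε*Real.cos θ + ε^2 := by
            rw [div_le_iff₀ hm2]; nlinarith
          nlinarith
        exact le_trans (min_le_right _ _) hx2
      by_contra hnot
      simp only [Set.mem_union, Set.mem_Icc, not_or, not_and_or, not_le] at hnot
      have h3 : a < θ := by
        rcases hnot.1 with h | h
        · exact absurd hθ0 (not_le.mpr h)
        · exact h
      have h4 : θ < 2*π - a := by
        rcases hnot.2 with h | h
        · linarith
        · exact absurd h (not_lt.mpr hθ2.le)
      have haI : a ∈ Icc 0 π := ⟨ha0, Real.arccos_le_pi _⟩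
      rcases le_or_gt θ π with hθπ | hθπ
      · have := Real.strictAntiOn_cos haI ⟨by linarith, hθπ⟩ h3
        rw [hca] at this; linarith
      · have h5 : (2*π - θ) ∈ Icc 0 π := ⟨by linarith, by linarith⟩
        have h6 : a < 2*π - θ := by linarith
        have := Real.strictAntiOn_cos haI h5 h6
        rw [hca, Real.cos_two_pi_sub] at this; linarith
    have hvol2 : volume {θ ∈ Set.Ico (0:ℝ) (2*π) |
        (Real.sqrt (1 + 2*ε*Real.cos θ + ε^2))⁻¹ ≤ m}
        ≤ ENNReal.ofReal a + ENNReal.ofReal a := by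
      calc volume _ ≤ volume (Icc 0 a ∪ Icc (2*π - a) (2*π)) := measure_mono hsub2
        _ ≤ volume (Icc (0:ℝ) a) + volume (Icc (2*π - a) (2*π)) := measure_union_le _ _
        _ = ENNReal.ofReal a + ENNReal.ofReal a := by
            rw [Real.volume_Icc, Real.volume_Icc]
            congr 2 <;> ring
    have hfin : ENNReal.ofReal π ≤ ENNReal.ofReal (a + a) := by
      rw [ENNReal.ofReal_add ha0 ha0]
      calc ENNReal.ofReal π ≤ _ := hge
        _ = _ := hmed
        _ ≤ _ := hvol2
    have := (ENNReal.ofReal_le_ofReal_iff (by linarith)).mp hfin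
    linarith


/-- the exact median/mean identity fails for the 3/2-harmonic function
|y|⁻¹ along a sequence of radii tending to 0. -/
theorem exact_median_mean_identity_fails :
    ∃ x : EuclideanSpace ℝ (Fin 2), x ≠ 0 ∧
      ∃ εn : ℕ → ℝ, (∀ n, 0 < εn n) ∧ Filter.Tendsto εn Filter.atTop (𝓝 0) ∧
        ∀ n, ∀ m : ℝ, IsCircleMedian (fun y => ‖y‖⁻¹) x (εn n) m →
          ‖x‖⁻¹ ≠ (2 / (3/2 : ℝ) - 1) * m +
            (2 - 2 / (3/2 : ℝ)) * circleAvg (fun y => ‖y‖⁻¹) x (εn n) := by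
  refine ⟨EuclideanSpace.single 0 1, ?_, fun n => 1/(100*((n:ℝ)+1)),
    fun n => by positivity, ?_, ?_⟩
  · intro h
    have h2 := congrArg (fun v : EuclideanSpace ℝ (Fin 2) => ‖v‖) h
    simp only [EuclideanSpace.norm_single, norm_one, norm_zero] at h2
    exact one_ne_zero h2
  · have h := tendsto_one_div_add_atTop_nhds_zero_nat.const_mul (1/100 : ℝ)
    rw [mul_zero] at h
    refine h.congr fun n => ?_
    have hn : ((n:ℝ)+1) ≠ 0 := by positivity
    field_simp
  · intro n m hmed
    set ε : ℝ := 1/(100*((n:ℝ)+1)) with hεdef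
    have hε : 0 < ε := by positivity
    have hε1 : ε ≤ 1/100 := by
      rw [hεdef]
      rw [div_le_div_iff₀ (by positivity) (by norm_num)]
      have : (0:ℝ) ≤ (n:ℝ) := Nat.cast_nonneg n
      nlinarith
    have hmge := median_ge ε m hε hε1 hmed
    have havg := avg_gt ε hε hε1
    have hxn : ‖(EuclideanSpace.single (0:Fin 2) (1:ℝ))‖⁻¹ = 1 := by
      rw [EuclideanSpace.norm_single]; norm_num
    rw [hxn]
    have hc1 : (2/(3/2:ℝ) - 1) = 1/3 := by norm_num
    have hc2 : (2 - 2/(3/2:ℝ)) = 2/3 := by norm_num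
    rw [hc1, hc2]
    intro heq
    linarith
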